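/- Let π be the presented group with generators u, v, x, y and relators [u,x], [u,y], [v,x], [v,y], [u,v]x⁻², x y x⁻¹ y (so u and v commute with x and y, [u,v] = x², and x y x⁻¹ = y⁻¹), and let N be the normal closure of {x, y} in π. Then the quotient homomorphism π → π/N admits no group-homomorphism section. -/

import Mathlib

open scoped commutatorElement

/-- Generators: `u = 0`, `v = 1`, `x = 2`, `y = 3`.  Relators: `[u,x]`, `[u,y]`,
`[v,x]`, `[v,y]`, `[u,v]x⁻²`, `xyx⁻¹y`.  This presents the fundamental group of a
`Nil³ × E¹`-manifold fibring over the torus with fibre the Klein bottle and trivial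
monodromy. -/
abbrev nilKleinBundleRels : Set (FreeGroup (Fin 4)) :=
  { ⁅(FreeGroup.of 0 : FreeGroup (Fin 4)), FreeGroup.of 2⁆,
    ⁅(FreeGroup.of 0 : FreeGroup (Fin 4)), FreeGroup.of 3⁆,
    ⁅(FreeGroup.of 1 : FreeGroup (Fin 4)), FreeGroup.of 2⁆,
    ⁅(FreeGroup.of 1 : FreeGroup (Fin 4)), FreeGroup.of 3⁆,
    ⁅(FreeGroup.of 0 : FreeGroup (Fin 4)), FreeGroup.of 1⁆ * ((FreeGroup.of 2) ^ 2)⁻¹,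
    (FreeGroup.of 2 : FreeGroup (Fin 4)) * FreeGroup.of 3 * (FreeGroup.of 2)⁻¹ *
      FreeGroup.of 3 }

/-- The fibre subgroup: the normal closure of `{x, y}` (a Klein bottle group). -/
abbrev nilKleinBundleFibre : Subgroup (PresentedGroup nilKleinBundleRels) :=
  Subgroup.normalClosure {PresentedGroup.of 2, PresentedGroup.of 3}


@[ext] structure Heis where
  a : ℤ
  b : ℤ
  c : ℤ

namespace Heis

instance : Mul Heis := ⟨fun x y => ⟨x.a + y.a, x.b + y.b, x.c + y.c + x.a * y.b⟩⟩
instance : One Heis := ⟨⟨0, 0, 0⟩⟩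
instance : Inv Heis := ⟨fun x => ⟨-x.a, -x.b, -x.c + x.a * x.b⟩⟩

@[simp] lemma mul_def (x y : Heis) :
    x * y = ⟨x.a + y.a, x.b + y.b, x.c + y.c + x.a * y.b⟩ := rfl
@[simp] lemma one_def : (1 : Heis) = ⟨0, 0, 0⟩ := rfl
@[simp] lemma inv_def (x : Heis) : x⁻¹ = ⟨-x.a, -x.b, -x.c + x.a * x.b⟩ := rfl

instance : Group Heis where
  mul_assoc x y z := by ext <;> simp <;> ring
  one_mul x := by ext <;> simp
  mul_one x := by ext <;> simp
  inv_mul_cancel x := by ext <;> simp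

end Heis

def heisMap : Fin 4 → Heis := ![⟨1,0,0⟩, ⟨0,2,0⟩, ⟨0,0,1⟩, 1]

lemma heis_rels : ∀ r ∈ nilKleinBundleRels, FreeGroup.lift heisMap r = 1 := by
  intro r hr
  simp only [nilKleinBundleRels, Set.mem_insert_iff, Set.mem_singleton_iff] at hr
  rcases hr with h|h|h|h|h|h <;> subst h <;>
    simp [commutatorElement_def, heisMap, sq]

/-- The quotient map `π → π/N` (the Klein bottle bundle over the torus with trivial
monodromy and group the above `Nil³ × E¹`-group) admits no group-homomorphism
section. -/
theorem nilKleinBundle_has_no_section :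
    ¬ ∃ s : (PresentedGroup nilKleinBundleRels ⧸ nilKleinBundleFibre) →*
        PresentedGroup nilKleinBundleRels,
      (QuotientGroup.mk' nilKleinBundleFibre).comp s =
        MonoidHom.id (PresentedGroup nilKleinBundleRels ⧸ nilKleinBundleFibre) := by
  rintro ⟨s, hs⟩
  set p := QuotientGroup.mk' nilKleinBundleFibre with hpdef
  have hps : ∀ q, p (s q) = q := fun q => DFunLike.congr_fun hs q
  set φ : PresentedGroup nilKleinBundleRels →* Heis := PresentedGroup.toGroup heis_rels
    with hφdef
  have hφof : ∀ i, φ (PresentedGroup.of i) = heisMap i :=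
    fun i => PresentedGroup.toGroup.of heis_rels
  have hxN : (PresentedGroup.of 2 : PresentedGroup nilKleinBundleRels) ∈ nilKleinBundleFibre :=
    Subgroup.subset_normalClosure (by simp)
  have hrel : ⁅(PresentedGroup.of 0 : PresentedGroup nilKleinBundleRels),
      PresentedGroup.of 1⁆ = (PresentedGroup.of 2 : PresentedGroup nilKleinBundleRels) ^ 2 := by
    have h1 : PresentedGroup.mk nilKleinBundleRels
        (⁅(FreeGroup.of 0 : FreeGroup (Fin 4)), FreeGroup.of 1⁆ *
          ((FreeGroup.of 2) ^ 2)⁻¹) = 1 := by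
      apply (QuotientGroup.eq_one_iff _).2
      exact Subgroup.subset_normalClosure (by simp [nilKleinBundleRels])
    simp only [map_mul, map_inv, map_pow, map_commutatorElement, mul_inv_eq_one] at h1
    exact h1
  have hq1 : ⁅p (PresentedGroup.of 0), p (PresentedGroup.of 1)⁆ = 1 := by
    rw [← map_commutatorElement, hrel]
    exact (QuotientGroup.eq_one_iff _).2 (pow_mem hxN 2)
  set a := s (p (PresentedGroup.of 0)) with hadef
  set b := s (p (PresentedGroup.of 1)) with hbdef
  have hab : ⁅a, b⁆ = 1 := by rw [← map_commutatorElement, hq1, map_one]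
  have haN : a * (PresentedGroup.of 0)⁻¹ ∈ nilKleinBundleFibre := by
    apply (QuotientGroup.eq_one_iff _).1
    show p _ = 1
    rw [map_mul, map_inv, hps, mul_inv_cancel]
  have hbN : b * (PresentedGroup.of 1)⁻¹ ∈ nilKleinBundleFibre := by
    apply (QuotientGroup.eq_one_iff _).1
    show p _ = 1
    rw [map_mul, map_inv, hps, mul_inv_cancel]
  have hcent : ∀ g ∈ nilKleinBundleFibre, φ g ∈ Subgroup.center Heis := by
    haveI : ((Subgroup.center Heis).comap φ).Normal :=
      Subgroup.Normal.comap inferInstance φ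
    intro g hg
    have hle : nilKleinBundleFibre ≤ (Subgroup.center Heis).comap φ := by
      apply Subgroup.normalClosure_le_normal
      rintro t ht
      simp only [Set.mem_insert_iff, Set.mem_singleton_iff] at ht
      rcases ht with rfl | rfl <;>
        simp only [SetLike.mem_coe, Subgroup.mem_comap, hφof] <;>
        exact Subgroup.mem_center_iff.2 (fun g => by ext <;> simp [heisMap] <;> ring)
    exact hle hg
  have hcomp : ∀ z ∈ Subgroup.center Heis, z.a = 0 ∧ z.b = 0 := by
    intro z hz
    have h1 := (Subgroup.mem_center_iff.1 hz) ⟨1,0,0⟩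
    have h2 := (Subgroup.mem_center_iff.1 hz) ⟨0,1,0⟩
    have hc1 := congrArg Heis.c h1
    have hc2 := congrArg Heis.c h2
    simp at hc1 hc2
    omega
  set m := φ (a * (PresentedGroup.of 0)⁻¹) with hmdef
  set n := φ (b * (PresentedGroup.of 1)⁻¹) with hndef
  obtain ⟨hma, hmb⟩ := hcomp _ (hcent _ haN)
  obtain ⟨hna, hnb⟩ := hcomp _ (hcent _ hbN)
  have hA : φ a = φ (a * (PresentedGroup.of 0)⁻¹) * heisMap 0 := by
    rw [← hφof 0, ← map_mul, inv_mul_cancel_right]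
  have hB : φ b = φ (b * (PresentedGroup.of 1)⁻¹) * heisMap 1 := by
    rw [← hφof 1, ← map_mul, inv_mul_cancel_right]
  have h1 : φ ⁅a, b⁆ = 1 := by rw [hab, map_one]
  rw [map_commutatorElement, hA, hB] at h1
  have hc := congrArg Heis.c h1
  simp [commutatorElement_def, heisMap, hma, hmb, hna, hnb, -map_mul, -map_inv] at hc
  linarith
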